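/- Let ξ be a real number with 0 < ξ < d_min²/2 and let M be an integer with M > ν·d_max²/ξ. Let x₀ be a message with codeword y₀, and let m be an integer such that [m−(2M+1)ν, m+(2M+1)ν) ⊆ [0, N+ν) and [m, m+ν) ⊆ [0, N). Suppose: (i) ‖r[d] − g(y₀[d])‖ < (d_min² − 2ξ)/(2·d_min) for every d ∈ [m−2Mν, m+2Mν); (ii) Σ_{d=m+2Mν}^{m+(2M+1)ν−1} ‖r[d] − g(y₀[d])‖² ≤ M·ξ − ν·d_max²; and (iii) Σ_{d=m−(2M+1)ν}^{m−2Mν−1} ‖r[d] − g(y₀[d])‖² ≤ M·ξ − ν·d_max². Then every message x* that minimizes S over all messages satisfies x*[m̃] = x₀[m̃] for all m̃ ∈ [m, m+ν). -/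

import Mathlib

set_option maxHeartbeats 1600000


open Finset

/-- A message of the convolutional code: `x[d] = 0` for `d < 0` and `d ≥ N`. -/
def IsMsg {K : Type*} [Zero K] (k N : ℕ) (x : ℤ → Fin k → K) : Prop :=
  ∀ d : ℤ, d < 0 ∨ (N : ℤ) ≤ d → x d = 0

/-- The codeword of a message: `y[d] = ∑_{l=0}^{ν-1} x[d-l] · G[l]`. -/
def cw {K : Type*} [Field K] (k n ν : ℕ) (G : ℕ → Matrix (Fin k) (Fin n) K)
    (x : ℤ → Fin k → K) (d : ℤ) : Fin n → K :=
  ∑ l ∈ Finset.range ν, Matrix.vecMul (x (d - l)) (G l)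

/-- Componentwise extension of the modulation map `gq : K → ℝ` to codeword symbols. -/
def gmap {K : Type*} (n : ℕ) (gq : K → ℝ) (y : Fin n → K) :
    EuclideanSpace ℝ (Fin n) :=
  WithLp.toLp 2 (fun i => gq (y i))

/-- Negative sum log likelihood `S(x) = ∑_{d=0}^{N+ν-1} ‖r[d] - g(y[d])‖²`. -/
noncomputable def negSLL {K : Type*} [Field K] (k n ν N : ℕ)
    (G : ℕ → Matrix (Fin k) (Fin n) K) (gq : K → ℝ)
    (r : ℤ → EuclideanSpace ℝ (Fin n)) (x : ℤ → Fin k → K) : ℝ :=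
  ∑ d ∈ Finset.Ico (0 : ℤ) ((N : ℤ) + ν), ‖r d - gmap n gq (cw k n ν G x d)‖ ^ 2

/-- If two messages agree on the window `(d-ν, d]`, their codeword symbols at `d` agree. -/
lemma cw_congr {K : Type*} [Field K] {k n ν : ℕ} (G : ℕ → Matrix (Fin k) (Fin n) K)
    {x xt : ℤ → Fin k → K} {d : ℤ} (h : ∀ l : ℕ, l < ν → x (d - l) = xt (d - l)) :
    cw k n ν G x d = cw k n ν G xt d := by
  unfold cw
  exact Finset.sum_congr rfl fun l hl => by rw [h l (Finset.mem_range.mp hl)]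

/-- Theorem 1: the neighboring-log-likelihood optimality test for convolutional
codes (with the precise constants from the proof via Theorem 3). If the NLL test
conditions hold around time `m` for a message `x₀`, then every ML message agrees
with `x₀` on `[m, m + ν)`. -/
theorem stmt_0 {K : Type*} [Field K] [Fintype K] [DecidableEq K]
    (k n ν N : ℕ) (hk : 1 ≤ k) (hn : 1 ≤ n) (hν : 1 ≤ ν) (hN : 1 ≤ N)
    (G : ℕ → Matrix (Fin k) (Fin n) K)
    (gq : K → ℝ) (hgq : Function.Injective gq)
    (hcard : ∃ y1 y2 : Fin n → K, y1 ≠ y2)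
    (dmin2 dmax2 : ℝ)
    (hdmin2 : IsLeast {t : ℝ | ∃ y1 y2 : Fin n → K, y1 ≠ y2 ∧
      t = ‖gmap n gq y1 - gmap n gq y2‖ ^ 2} dmin2)
    (hdmax2 : IsGreatest {t : ℝ | ∃ y1 y2 : Fin n → K, y1 ≠ y2 ∧
      t = ‖gmap n gq y1 - gmap n gq y2‖ ^ 2} dmax2)
    (r : ℤ → EuclideanSpace ℝ (Fin n))
    -- ν-observability of the (minimal) encoder
    (hobs : ∀ x xt : ℤ → Fin k → K, IsMsg k N x → IsMsg k N xt →
      ∀ m : ℤ, x m ≠ xt m →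
        ∃ mt : ℤ, m ≤ mt ∧ mt < m + (ν : ℤ) ∧ cw k n ν G x mt ≠ cw k n ν G xt mt)
    (ξ : ℝ) (hξ1 : 0 < ξ) (hξ2 : ξ < dmin2 / 2)
    (M : ℤ) (hM : (ν : ℝ) * dmax2 / ξ < (M : ℝ))
    (x₀ : ℤ → Fin k → K) (hx₀ : IsMsg k N x₀)
    (m : ℤ)
    (hw1 : 0 ≤ m - (2 * M + 1) * ν) (hw2 : m + (2 * M + 1) * ν ≤ (N : ℤ) + ν)
    (hw3 : 0 ≤ m) (hw4 : m + (ν : ℤ) ≤ (N : ℤ))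
    (h1 : ∀ d : ℤ, m - 2 * M * ν ≤ d → d < m + 2 * M * ν →
      ‖r d - gmap n gq (cw k n ν G x₀ d)‖ < (dmin2 - 2 * ξ) / (2 * Real.sqrt dmin2))
    (h2 : ∑ d ∈ Finset.Ico (m + 2 * M * ν) (m + (2 * M + 1) * ν),
        ‖r d - gmap n gq (cw k n ν G x₀ d)‖ ^ 2 ≤ (M : ℝ) * ξ - (ν : ℝ) * dmax2)
    (h3 : ∑ d ∈ Finset.Ico (m - (2 * M + 1) * ν) (m - 2 * M * ν),
        ‖r d - gmap n gq (cw k n ν G x₀ d)‖ ^ 2 ≤ (M : ℝ) * ξ - (ν : ℝ) * dmax2) :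
    ∀ xs : ℤ → Fin k → K, IsMsg k N xs →
      (∀ x' : ℤ → Fin k → K, IsMsg k N x' →
        negSLL k n ν N G gq r xs ≤ negSLL k n ν N G gq r x') →
      ∀ mt : ℤ, m ≤ mt → mt < m + (ν : ℤ) → xs mt = x₀ mt := by
  classical
  intro xs hxs hmin
  by_contra hcon
  push_neg at hcon
  obtain ⟨mt, hmt1, hmt2, hmtne⟩ := hcon
  have hνZ : (1:ℤ) ≤ (ν:ℤ) := by exact_mod_cast hν
  have hν0 : (0:ℤ) ≤ (ν:ℤ) := by linarith
  -- basic facts about dmin2, dmax2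
  have hginj : ∀ y1 y2 : Fin n → K, gmap n gq y1 = gmap n gq y2 → y1 = y2 := by
    intro y1 y2 h
    funext i
    exact hgq (congrArg (fun v : EuclideanSpace ℝ (Fin n) => v i) h)
  have hdmin_le : ∀ y1 y2 : Fin n → K, y1 ≠ y2 →
      dmin2 ≤ ‖gmap n gq y1 - gmap n gq y2‖ ^ 2 :=
    fun y1 y2 h => hdmin2.2 ⟨y1, y2, h, rfl⟩
  have hdmin_pos : 0 < dmin2 := by
    obtain ⟨y1, y2, hy12, hdeq⟩ := hdmin2.1
    have hne : gmap n gq y1 - gmap n gq y2 ≠ 0 :=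
      sub_ne_zero_of_ne (fun h => hy12 (hginj _ _ h))
    rw [hdeq]
    exact pow_pos (norm_pos_iff.mpr hne) 2
  have hdmax_ge_dmin : dmin2 ≤ dmax2 := hdmax2.2 hdmin2.1
  have hdmax_pos : 0 < dmax2 := lt_of_lt_of_le hdmin_pos hdmax_ge_dmin
  have hsM_nonneg : (0:ℝ) ≤ Real.sqrt dmax2 := Real.sqrt_nonneg _
  have hsM_sq : Real.sqrt dmax2 ^ 2 = dmax2 := Real.sq_sqrt hdmax_pos.le
  have hdmax_norm_le : ∀ y1 y2 : Fin n → K,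
      ‖gmap n gq y1 - gmap n gq y2‖ ≤ Real.sqrt dmax2 := by
    intro y1 y2
    by_cases h : y1 = y2
    · subst h; simp [hsM_nonneg]
    · have h2' : ‖gmap n gq y1 - gmap n gq y2‖ ^ 2 ≤ dmax2 := hdmax2.2 ⟨y1, y2, h, rfl⟩
      nlinarith [norm_nonneg (gmap n gq y1 - gmap n gq y2), hsM_nonneg, hsM_sq]
  have hs_pos : 0 < Real.sqrt dmin2 := Real.sqrt_pos.mpr hdmin_pos
  have hs_sq : Real.sqrt dmin2 ^ 2 = dmin2 := Real.sq_sqrt hdmin_pos.le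
  have hMgt : (ν:ℝ) * dmax2 < (M:ℝ) * ξ := by
    rw [div_lt_iff₀ hξ1] at hM; linarith
  have hM1 : 1 ≤ M := by
    have hν1 : (1:ℝ) ≤ (ν:ℝ) := by exact_mod_cast hν
    have h0 : (0:ℝ) < (ν:ℝ) * dmax2 := by nlinarith
    have : (0:ℝ) < (M:ℝ) := by nlinarith
    have : (0:ℤ) < M := by exact_mod_cast this
    omega
  -- pointwise gain at a codeword-difference position in the good region
  have gain : ∀ d : ℤ, m - 2 * M * ν ≤ d → d < m + 2 * M * ν →
      cw k n ν G xs d ≠ cw k n ν G x₀ d →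
      ‖r d - gmap n gq (cw k n ν G x₀ d)‖ ^ 2
        - ‖r d - gmap n gq (cw k n ν G xs d)‖ ^ 2 < -(2 * ξ) := by
    intro d hd1 hd2 hne
    have he_lt := h1 d hd1 hd2
    set A := gmap n gq (cw k n ν G xs d) with hA
    set B := gmap n gq (cw k n ν G x₀ d) with hB
    have hD2 : dmin2 ≤ ‖A - B‖ ^ 2 := hdmin_le _ _ hne
    have hD_ge : Real.sqrt dmin2 ≤ ‖A - B‖ := by
      nlinarith [norm_nonneg (A - B), hs_sq, hs_pos]
    have htri : ‖A - B‖ ≤ ‖r d - A‖ + ‖r d - B‖ := by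
      calc ‖A - B‖ = ‖(A - r d) + (r d - B)‖ := by rw [sub_add_sub_cancel]
        _ ≤ ‖A - r d‖ + ‖r d - B‖ := norm_add_le _ _
        _ = ‖r d - A‖ + ‖r d - B‖ := by rw [norm_sub_rev]
    set e := ‖r d - B‖ with he
    set ts := ‖r d - A‖ with hts
    set s := Real.sqrt dmin2 with hsdef
    have he0 : 0 ≤ e := norm_nonneg _
    have hts0 : 0 ≤ ts := norm_nonneg _
    have hρs : e * (2 * s) < dmin2 - 2 * ξ := by
      have h2s : (0:ℝ) < 2 * s := by linarith
      have := mul_lt_mul_of_pos_right he_lt h2s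
      rwa [div_mul_cancel₀ _ (ne_of_gt h2s)] at this
    have h5 : s - e ≤ ts := by linarith
    have h6 : e < s := by nlinarith
    have h7 : (s - e) ^ 2 ≤ ts ^ 2 := by nlinarith
    nlinarith
  -- pointwise cost bound via dmax
  have cost : ∀ (z : ℤ → Fin k → K) (d : ℤ),
      ‖r d - gmap n gq (cw k n ν G z d)‖ ^ 2 ≤
        2 * ‖r d - gmap n gq (cw k n ν G x₀ d)‖ ^ 2 + 2 * dmax2 := by
    intro z d
    set A := gmap n gq (cw k n ν G z d) with hA
    set B := gmap n gq (cw k n ν G x₀ d) with hB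
    have htri : ‖r d - A‖ ≤ ‖r d - B‖ + ‖B - A‖ := by
      calc ‖r d - A‖ = ‖(r d - B) + (B - A)‖ := by rw [sub_add_sub_cancel]
        _ ≤ _ := norm_add_le _ _
    have hBA : ‖B - A‖ ≤ Real.sqrt dmax2 := hdmax_norm_le _ _
    nlinarith [norm_nonneg (r d - A), norm_nonneg (r d - B), norm_nonneg (B - A),
      hsM_nonneg, hsM_sq, sq_nonneg (‖r d - B‖ - Real.sqrt dmax2)]
  -- observability: a message difference in a length-ν block forces a codeword
  -- difference within distance 2ν of the block start
  have key : ∀ c : ℤ, (∃ e : ℤ, c ≤ e ∧ e < c + ν ∧ xs e ≠ x₀ e) →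
      ∃ d : ℤ, c ≤ d ∧ d < c + 2 * ν ∧ cw k n ν G xs d ≠ cw k n ν G x₀ d := by
    rintro c ⟨e, he1, he2, hne⟩
    obtain ⟨d, hd1, hd2, hd3⟩ := hobs xs x₀ hxs hx₀ e hne
    exact ⟨d, le_trans he1 hd1, by omega, hd3⟩
  -- RIGHT splice point
  obtain ⟨b, PR, cR, hb1, hb2, hPRpts, hPRne, hcR, hRC⟩ :
      ∃ (b : ℤ) (PR : Finset ℤ) (cR : ℝ),
        m + 2 * ν ≤ b ∧ b ≤ m + 2 * M * ν ∧
        (∀ d ∈ PR, m ≤ d ∧ d < b ∧ cw k n ν G xs d ≠ cw k n ν G x₀ d) ∧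
        PR.Nonempty ∧
        cR ≤ 2 * ξ * (PR.card : ℝ) ∧
        (((∀ e : ℤ, b - ν ≤ e → e < b → xs e = x₀ e) ∧ cR = 0) ∨
          (b = m + 2 * M * ν ∧ cR = 2 * (M : ℝ) * ξ)) := by
    by_cases hAR : ∃ j : ℤ, 1 ≤ j ∧ j ≤ 2 * M ∧
        ∀ e : ℤ, m + (j - 1) * ν ≤ e → e < m + j * ν → xs e = x₀ e
    · obtain ⟨j, hj1, hj2, hjag⟩ := hAR
      have hj2' : 2 ≤ j := by
        rcases (by omega : j = 1 ∨ 2 ≤ j) with hj | hj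
        · exfalso
          subst hj
          exact hmtne (hjag mt (by linarith) (by linarith))
        · exact hj
      obtain ⟨ds, hds1, hds2, hds3⟩ := key m ⟨mt, hmt1, hmt2, hmtne⟩
      have hmul1 : 2 * (ν:ℤ) ≤ j * ν := by
        have := mul_le_mul_of_nonneg_right hj2' hν0
        linarith
      have hmul2 : j * (ν:ℤ) ≤ 2 * M * ν := by
        have := mul_le_mul_of_nonneg_right hj2 hν0
        linarith
      refine ⟨m + j * ν, {ds}, 0, by linarith, by linarith, ?_, ⟨ds, Finset.mem_singleton_self ds⟩,
        ?_, Or.inl ⟨?_, rfl⟩⟩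
      · intro d hd
        rw [Finset.mem_singleton] at hd
        subst hd
        exact ⟨hds1, by linarith, hds3⟩
      · simp
        positivity
      · intro e heL heU
        exact hjag e (by linarith) heU
    · push_neg at hAR
      have hDex : ∀ t : ℕ, ∃ d : ℤ, t < M.toNat →
          (m + 2 * (t:ℤ) * ν ≤ d ∧ d < m + 2 * (t:ℤ) * ν + 2 * ν ∧
            cw k n ν G xs d ≠ cw k n ν G x₀ d) := by
        intro t
        by_cases ht : t < M.toNat
        · obtain ⟨e, he1, he2, hne⟩ := hAR (2 * (t:ℤ) + 1) (by omega) (by omega)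
          obtain ⟨d, hd1, hd2, hd3⟩ := key (m + 2 * (t:ℤ) * ν)
            ⟨e, by linarith [he1], by linarith [he2], hne⟩
          exact ⟨d, fun _ => ⟨hd1, by linarith, hd3⟩⟩
        · exact ⟨0, fun h => absurd h ht⟩
      choose D hD using hDex
      have hmono : ∀ t1 t2 : ℕ, t1 < t2 → t2 < M.toNat → D t1 < D t2 := by
        intro t1 t2 hlt ht2
        have h1' := hD t1 (lt_trans hlt ht2)
        have h2' := hD t2 ht2
        have hle : (t1:ℤ) + 1 ≤ (t2:ℤ) := by exact_mod_cast hlt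
        have hs' : 2 * (t1:ℤ) * ν + 2 * ν ≤ 2 * (t2:ℤ) * ν := by nlinarith
        linarith [h1'.2.1, h2'.1]
      have hinj : Set.InjOn D ↑(Finset.range M.toNat) := by
        intro t1 ht1 t2 ht2 heq
        simp only [Finset.coe_range, Set.mem_Iio] at ht1 ht2
        rcases Nat.lt_trichotomy t1 t2 with h | h | h
        · exact absurd heq (ne_of_lt (hmono t1 t2 h ht2))
        · exact h
        · exact absurd heq.symm (ne_of_lt (hmono t2 t1 h ht1))
      have hmulM : (1:ℤ) * ν ≤ M * ν := mul_le_mul_of_nonneg_right hM1 hν0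
      refine ⟨m + 2 * M * ν, (Finset.range M.toNat).image D, 2 * (M:ℝ) * ξ,
        by linarith, le_refl _, ?_, ?_, ?_, Or.inr ⟨rfl, rfl⟩⟩
      · intro d hd
        simp only [Finset.mem_image, Finset.mem_range] at hd
        obtain ⟨t, ht, rfl⟩ := hd
        have h := hD t ht
        have htM : (t:ℤ) + 1 ≤ M := by omega
        have hpos : (0:ℤ) ≤ 2 * (t:ℤ) * ν := by positivity
        have hupp : 2 * (t:ℤ) * ν + 2 * ν ≤ 2 * M * ν := by nlinarith
        exact ⟨by linarith [h.1], by linarith [h.2.1], h.2.2⟩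
      · exact ⟨D 0, Finset.mem_image_of_mem D (Finset.mem_range.mpr (by omega))⟩
      · have hcard : ((Finset.range M.toNat).image D).card = M.toNat := by
          rw [Finset.card_image_of_injOn hinj, Finset.card_range]
        rw [hcard]
        have hMR : ((M.toNat : ℕ) : ℝ) = (M : ℝ) := by
          exact_mod_cast congrArg (fun z : ℤ => (z:ℝ)) (Int.toNat_of_nonneg (by omega : (0:ℤ) ≤ M))
        rw [hMR]
        linarith
  -- LEFT splice point
  obtain ⟨a, p, PL, cL, ha1, hap1, hap2, hp4, hp5, hPLpts, hcL, hLC⟩ :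
      ∃ (a p : ℤ) (PL : Finset ℤ) (cL : ℝ),
        m - (2 * M + 1) * ν ≤ a ∧ a ≤ p ∧ p ≤ a + ν ∧ m - 2 * M * ν ≤ p ∧ p ≤ m ∧
        (∀ d ∈ PL, p ≤ d ∧ d < m ∧ cw k n ν G xs d ≠ cw k n ν G x₀ d) ∧
        cL ≤ 2 * ξ * (PL.card : ℝ) ∧
        (((∀ e : ℤ, a - ν ≤ e → e < a → xs e = x₀ e) ∧ p = a ∧ cL = 0) ∨
          (a = m - (2 * M + 1) * ν ∧ p = a + ν ∧ cL = 2 * (M : ℝ) * ξ)) := by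
    by_cases hAL : ∃ i : ℤ, 1 ≤ i ∧ i ≤ 2 * M ∧
        ∀ e : ℤ, m - i * ν ≤ e → e < m - (i - 1) * ν → xs e = x₀ e
    · obtain ⟨i, hi1, hi2, hiag⟩ := hAL
      have hmul1 : (i - 1) * (ν:ℤ) ≤ (2 * M + 1) * ν :=
        mul_le_mul_of_nonneg_right (by omega) hν0
      have hmul2 : (i - 1) * (ν:ℤ) ≤ 2 * M * ν :=
        mul_le_mul_of_nonneg_right (by omega) hν0
      have hmul3 : (0:ℤ) ≤ (i - 1) * ν := mul_nonneg (by omega) hν0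
      refine ⟨m - (i - 1) * ν, m - (i - 1) * ν, ∅, 0, by linarith, le_refl _, by linarith,
        by linarith, by linarith, ?_, by simp, Or.inl ⟨?_, rfl, rfl⟩⟩
      · intro d hd
        exact absurd hd (Finset.notMem_empty d)
      · intro e heL heU
        exact hiag e (by linarith) heU
    · push_neg at hAL
      have hDex : ∀ t : ℕ, ∃ d : ℤ, t < M.toNat →
          (m - (2 * (t:ℤ) + 2) * ν ≤ d ∧ d < m - 2 * (t:ℤ) * ν ∧
            cw k n ν G xs d ≠ cw k n ν G x₀ d) := by
        intro t
        by_cases ht : t < M.toNat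
        · obtain ⟨e, he1, he2, hne⟩ := hAL (2 * (t:ℤ) + 2) (by omega) (by omega)
          obtain ⟨d, hd1, hd2, hd3⟩ := key (m - (2 * (t:ℤ) + 2) * ν)
            ⟨e, by linarith [he1], by linarith [he2], hne⟩
          exact ⟨d, fun _ => ⟨hd1, by linarith, hd3⟩⟩
        · exact ⟨0, fun h => absurd h ht⟩
      choose D hD using hDex
      have hmono : ∀ t1 t2 : ℕ, t1 < t2 → t2 < M.toNat → D t2 < D t1 := by
        intro t1 t2 hlt ht2
        have h1' := hD t1 (lt_trans hlt ht2)
        have h2' := hD t2 ht2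
        have hle : (t1:ℤ) + 1 ≤ (t2:ℤ) := by exact_mod_cast hlt
        have hs' : (2 * (t1:ℤ) + 2) * ν ≤ 2 * (t2:ℤ) * ν := by nlinarith
        linarith [h2'.2.1, h1'.1]
      have hinj : Set.InjOn D ↑(Finset.range M.toNat) := by
        intro t1 ht1 t2 ht2 heq
        simp only [Finset.coe_range, Set.mem_Iio] at ht1 ht2
        rcases Nat.lt_trichotomy t1 t2 with h | h | h
        · exact absurd heq.symm (ne_of_lt (hmono t1 t2 h ht2))
        · exact h
        · exact absurd heq (ne_of_lt (hmono t2 t1 h ht1))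
      have hmulM : (0:ℤ) ≤ 2 * M * ν := mul_nonneg (by omega) hν0
      refine ⟨m - (2 * M + 1) * ν, m - 2 * M * ν, (Finset.range M.toNat).image D,
        2 * (M:ℝ) * ξ, le_refl _, by linarith, by linarith, le_refl _, by linarith,
        ?_, ?_, Or.inr ⟨rfl, by ring, rfl⟩⟩
      · intro d hd
        simp only [Finset.mem_image, Finset.mem_range] at hd
        obtain ⟨t, ht, rfl⟩ := hd
        have h := hD t ht
        have htM : (t:ℤ) + 1 ≤ M := by omega
        have hpos : (0:ℤ) ≤ 2 * (t:ℤ) * ν := by positivity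
        have hupp : (2 * (t:ℤ) + 2) * ν ≤ 2 * M * ν := by nlinarith
        exact ⟨by linarith [h.1], by linarith [h.2.1], h.2.2⟩
      · have hcard : ((Finset.range M.toNat).image D).card = M.toNat := by
          rw [Finset.card_image_of_injOn hinj, Finset.card_range]
        rw [hcard]
        have hMR : ((M.toNat : ℕ) : ℝ) = (M : ℝ) := by
          exact_mod_cast congrArg (fun z : ℤ => (z:ℝ)) (Int.toNat_of_nonneg (by omega : (0:ℤ) ≤ M))
        rw [hMR]
        linarith
  -- the spliced message
  set x' : ℤ → Fin k → K := fun d => if a ≤ d ∧ d < b then x₀ d else xs d with hx'def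
  have hx'msg : IsMsg k N x' := by
    intro d hd
    simp only [hx'def]
    split
    · exact hx₀ d hd
    · exact hxs d hd
  have cw_lt : ∀ d : ℤ, d < a → cw k n ν G x' d = cw k n ν G xs d := by
    intro d hd
    refine cw_congr G fun l hl => ?_
    have hneg : ¬(a ≤ d - (l:ℤ) ∧ d - (l:ℤ) < b) := by
      rintro ⟨hc1, _⟩; omega
    simp only [hx'def, if_neg hneg]
  have cw_ge : ∀ d : ℤ, b + ν ≤ d → cw k n ν G x' d = cw k n ν G xs d := by
    intro d hd
    refine cw_congr G fun l hl => ?_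
    have hneg : ¬(a ≤ d - (l:ℤ) ∧ d - (l:ℤ) < b) := by
      rintro ⟨_, hc2⟩; omega
    simp only [hx'def, if_neg hneg]
  have cw_pure : ∀ d : ℤ, p ≤ d → d < b → cw k n ν G x' d = cw k n ν G x₀ d := by
    intro d hd1 hd2
    refine cw_congr G fun l hl => ?_
    by_cases hc : a ≤ d - (l:ℤ) ∧ d - (l:ℤ) < b
    · simp only [hx'def, if_pos hc]
    · simp only [hx'def, if_neg hc]
      have hlt : d - (l:ℤ) < a := by omega
      rcases hLC with ⟨hKL, hpa, _⟩ | ⟨_, hpa, _⟩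
      · exact hKL _ (by omega) hlt
      · exfalso; omega
  have cw_rightA : (∀ e : ℤ, b - ν ≤ e → e < b → xs e = x₀ e) →
      ∀ d : ℤ, b ≤ d → cw k n ν G x' d = cw k n ν G xs d := by
    intro hag d hd
    refine cw_congr G fun l hl => ?_
    by_cases hc : a ≤ d - (l:ℤ) ∧ d - (l:ℤ) < b
    · simp only [hx'def, if_pos hc]
      exact (hag _ (by omega) hc.2).symm
    · simp only [hx'def, if_neg hc]
  -- the difference function
  set f : ℤ → ℝ := fun d => ‖r d - gmap n gq (cw k n ν G x' d)‖ ^ 2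
      - ‖r d - gmap n gq (cw k n ν G xs d)‖ ^ 2 with hf
  have hpb : p ≤ b := by linarith
  have hΔ : negSLL k n ν N G gq r x' - negSLL k n ν N G gq r xs =
      ∑ d ∈ Finset.Ico a (b + ν), f d := by
    unfold negSLL
    rw [← Finset.sum_sub_distrib]
    refine (Finset.sum_subset ?_ ?_).symm
    · intro d hd
      rw [Finset.mem_Ico] at *
      constructor
      · linarith [hd.1]
      · linarith [hd.2]
    · intro d hd hnd
      rw [Finset.mem_Ico] at hd
      simp only [Finset.mem_Ico] at hnd
      have hor : d < a ∨ b + (ν:ℤ) ≤ d := by omega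
      rcases hor with h | h
      · rw [cw_lt d h]; ring
      · rw [cw_ge d h]; ring
  have hsplit : ∑ d ∈ Finset.Ico a (b + ν), f d =
      (∑ d ∈ Finset.Ico a p, f d) + (∑ d ∈ Finset.Ico p b, f d)
        + (∑ d ∈ Finset.Ico b (b + ν), f d) := by
    rw [← Finset.Ico_union_Ico_eq_Ico hap1 (show p ≤ b + (ν:ℤ) by linarith),
      Finset.sum_union (Finset.Ico_disjoint_Ico_consecutive a p (b + (ν:ℤ))),
      ← Finset.Ico_union_Ico_eq_Ico hpb (show b ≤ b + (ν:ℤ) by linarith),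
      Finset.sum_union (Finset.Ico_disjoint_Ico_consecutive p b (b + (ν:ℤ)))]
    ring
  -- left boundary cost
  have hSL : ∑ d ∈ Finset.Ico a p, f d ≤ cL := by
    rcases hLC with ⟨_, hpa, hcL0⟩ | ⟨haB, hpB, hcLB⟩
    · rw [hpa, hcL0]
      simp
    · have hIco : Finset.Ico a p = Finset.Ico (m - (2 * M + 1) * ν) (m - 2 * M * ν) := by
        rw [haB] at hpB ⊢
        rw [hpB]
        congr 1
        ring
      have hcard : (Finset.Ico a p).card = ν := by
        rw [Int.card_Ico]
        omega
      have hterm : ∀ d ∈ Finset.Ico a p, f d ≤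
          2 * ‖r d - gmap n gq (cw k n ν G x₀ d)‖ ^ 2 + 2 * dmax2 := by
        intro d _
        have h0 : (0:ℝ) ≤ ‖r d - gmap n gq (cw k n ν G xs d)‖ ^ 2 := by positivity
        have := cost x' d
        simp only [hf]
        linarith
      have hsum3 : ∑ d ∈ Finset.Ico a p, ‖r d - gmap n gq (cw k n ν G x₀ d)‖ ^ 2 ≤
          (M:ℝ) * ξ - (ν:ℝ) * dmax2 := by
        rw [hIco]; exact h3
      calc ∑ d ∈ Finset.Ico a p, f d
          ≤ ∑ d ∈ Finset.Ico a p,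
              (2 * ‖r d - gmap n gq (cw k n ν G x₀ d)‖ ^ 2 + 2 * dmax2) :=
            Finset.sum_le_sum hterm
        _ = 2 * (∑ d ∈ Finset.Ico a p, ‖r d - gmap n gq (cw k n ν G x₀ d)‖ ^ 2)
              + ((Finset.Ico a p).card : ℝ) * (2 * dmax2) := by
            rw [Finset.sum_add_distrib, Finset.mul_sum, Finset.sum_const, nsmul_eq_mul]
        _ ≤ 2 * ((M:ℝ) * ξ - (ν:ℝ) * dmax2) + (ν:ℝ) * (2 * dmax2) := by
            rw [hcard]
            have : ((ν:ℕ):ℝ) = (ν:ℝ) := rfl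
            rw [this]
            linarith
        _ = cL := by rw [hcLB]; ring
  -- right boundary cost
  have hSR : ∑ d ∈ Finset.Ico b (b + ν), f d ≤ cR := by
    rcases hRC with ⟨hag, hcR0⟩ | ⟨hbB, hcRB⟩
    · rw [hcR0]
      refine le_of_eq (Finset.sum_eq_zero ?_)
      intro d hd
      rw [Finset.mem_Ico] at hd
      simp only [hf]
      rw [cw_rightA hag d hd.1]
      ring
    · have hIco : Finset.Ico b (b + ν) =
          Finset.Ico (m + 2 * M * ν) (m + (2 * M + 1) * ν) := by
        rw [hbB]
        congr 1
        ring
      have hcard : (Finset.Ico b (b + (ν:ℤ))).card = ν := by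
        rw [Int.card_Ico]
        omega
      have hterm : ∀ d ∈ Finset.Ico b (b + (ν:ℤ)), f d ≤
          2 * ‖r d - gmap n gq (cw k n ν G x₀ d)‖ ^ 2 + 2 * dmax2 := by
        intro d _
        have h0 : (0:ℝ) ≤ ‖r d - gmap n gq (cw k n ν G xs d)‖ ^ 2 := by positivity
        have := cost x' d
        simp only [hf]
        linarith
      have hsum2 : ∑ d ∈ Finset.Ico b (b + (ν:ℤ)),
          ‖r d - gmap n gq (cw k n ν G x₀ d)‖ ^ 2 ≤ (M:ℝ) * ξ - (ν:ℝ) * dmax2 := by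
        rw [hIco]; exact h2
      calc ∑ d ∈ Finset.Ico b (b + (ν:ℤ)), f d
          ≤ ∑ d ∈ Finset.Ico b (b + (ν:ℤ)),
              (2 * ‖r d - gmap n gq (cw k n ν G x₀ d)‖ ^ 2 + 2 * dmax2) :=
            Finset.sum_le_sum hterm
        _ = 2 * (∑ d ∈ Finset.Ico b (b + (ν:ℤ)), ‖r d - gmap n gq (cw k n ν G x₀ d)‖ ^ 2)
              + ((Finset.Ico b (b + (ν:ℤ))).card : ℝ) * (2 * dmax2) := by
            rw [Finset.sum_add_distrib, Finset.mul_sum, Finset.sum_const, nsmul_eq_mul]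
        _ ≤ 2 * ((M:ℝ) * ξ - (ν:ℝ) * dmax2) + (ν:ℝ) * (2 * dmax2) := by
            rw [hcard]
            have : ((ν:ℕ):ℝ) = (ν:ℝ) := rfl
            rw [this]
            linarith
        _ = cR := by rw [hcRB]; ring
  -- middle region
  have hPsub : PL ∪ PR ⊆ Finset.Ico p b := by
    intro d hd
    rw [Finset.mem_union] at hd
    rcases hd with h | h
    · obtain ⟨hh1, hh2, _⟩ := hPLpts d h
      exact Finset.mem_Ico.mpr ⟨hh1, by linarith⟩
    · obtain ⟨hh1, hh2, _⟩ := hPRpts d h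
      exact Finset.mem_Ico.mpr ⟨by linarith, hh2⟩
  have hdisj : Disjoint PL PR := by
    rw [Finset.disjoint_left]
    intro d hdl hdr
    have hh1 := (hPLpts d hdl).2.1
    have hh2 := (hPRpts d hdr).1
    linarith
  have hgood : ∀ d ∈ Finset.Ico p b, m - 2 * M * ν ≤ d ∧ d < m + 2 * M * ν := by
    intro d hd
    rw [Finset.mem_Ico] at hd
    exact ⟨by linarith [hd.1], by linarith [hd.2]⟩
  have hfpure_le : ∀ d ∈ Finset.Ico p b, f d ≤ 0 := by
    intro d hd
    have hg := hgood d hd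
    rw [Finset.mem_Ico] at hd
    have hc := cw_pure d hd.1 hd.2
    simp only [hf]
    rw [hc]
    by_cases hne : cw k n ν G xs d = cw k n ν G x₀ d
    · rw [hne]
      simp
    · have := gain d hg.1 hg.2 hne
      linarith
  have hfP_lt : ∀ d ∈ PL ∪ PR, f d < -(2 * ξ) := by
    intro d hd
    have hdIco := hPsub hd
    have hg := hgood d hdIco
    rw [Finset.mem_Ico] at hdIco
    have hc := cw_pure d hdIco.1 hdIco.2
    have hne : cw k n ν G xs d ≠ cw k n ν G x₀ d := by
      rw [Finset.mem_union] at hd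
      rcases hd with h | h
      · exact (hPLpts d h).2.2
      · exact (hPRpts d h).2.2
    have := gain d hg.1 hg.2 hne
    simp only [hf]
    rw [hc]
    linarith
  have hPne : (PL ∪ PR).Nonempty := by
    obtain ⟨d, hd⟩ := hPRne
    exact ⟨d, Finset.mem_union_right _ hd⟩
  have hSM : ∑ d ∈ Finset.Ico p b, f d < -(2 * ξ) * ((PL.card : ℝ) + (PR.card : ℝ)) := by
    have hsdiff := Finset.sum_sdiff (f := f) hPsub
    have hh1 : ∑ d ∈ Finset.Ico p b \ (PL ∪ PR), f d ≤ 0 :=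
      Finset.sum_nonpos fun d hd => hfpure_le d (Finset.mem_sdiff.mp hd).1
    have hh2 : ∑ d ∈ PL ∪ PR, f d < ∑ _d ∈ PL ∪ PR, (-(2 * ξ)) :=
      Finset.sum_lt_sum_of_nonempty hPne hfP_lt
    have hh3 : ∑ _d ∈ PL ∪ PR, (-(2 * ξ)) = ((PL ∪ PR).card : ℝ) * (-(2 * ξ)) := by
      rw [Finset.sum_const, nsmul_eq_mul]
    have hh4 : (PL ∪ PR).card = PL.card + PR.card := Finset.card_union_of_disjoint hdisj
    rw [hh4] at hh3
    push_cast at hh3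
    linarith
  -- conclusion
  have hΔlt : negSLL k n ν N G gq r x' - negSLL k n ν N G gq r xs < 0 := by
    rw [hΔ, hsplit]
    linarith [hSL, hSR, hSM, hcL, hcR]
  have hge := hmin x' hx'msg
  linarith
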